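/- For every real k > 0 there exists a positive constant C (depending only on k) such that the following holds: for every real Hilbert space H, every bounded nonnegative selfadjoint operator A : H →L[ℝ] H, every solution w of w'' + A w + w' = 0 with data (w0,w1) ∈ H × H, and every t ≥ 0, (1+t)^k (‖w(t)‖_{E♯}² + t E(w;t)) + ∫₀ᵗ (1+s)^k (⟨A w(s), w(s)⟩ + (1+s)‖w'(s)‖²) ds ≤ C (‖(w0,w1)‖_H² + ∫₀ᵗ (1+s)^{k−1} ‖w(s)‖² ds). -/

import Mathlib

open scoped RealInnerProductSpace

universe u

set_option maxHeartbeats 4000000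

private lemma aux_rpow (k c0 : ℝ) (hc : 0 ≤ c0) :
    ∃ M : ℝ, 0 ≤ M ∧ ∀ x : ℝ, 1 ≤ x → c0 * x ^ (k - 1) ≤ x ^ (k + 1) + M := by
  refine ⟨c0 * max 1 ((max 1 c0) ^ (k - 1)), by positivity, fun x hx => ?_⟩
  have hx0 : (0:ℝ) < x := by linarith
  rcases le_total x (max 1 c0) with h | h
  · have h1 : x ^ (k-1) ≤ max 1 ((max 1 c0) ^ (k - 1)) := by
      rcases le_or_gt 0 (k-1) with hk1 | hk1
      · exact le_max_of_le_right (Real.rpow_le_rpow hx0.le h hk1)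
      · exact le_max_of_le_left (Real.rpow_le_one_of_one_le_of_nonpos hx hk1.le)
    have h2 := mul_le_mul_of_nonneg_left h1 hc
    have h3 : (0:ℝ) ≤ x ^ (k+1) := Real.rpow_nonneg hx0.le _
    linarith
  · have h1 : c0 ≤ x^(2:ℕ) := by
      have h2 := le_trans (le_max_right 1 c0) h
      nlinarith
    have h2 : c0 * x^(k-1) ≤ x^(2:ℕ) * x^(k-1) :=
      mul_le_mul_of_nonneg_right h1 (Real.rpow_nonneg hx0.le _)
    have h3 : (x:ℝ)^(2:ℕ) * x^(k-1) = x^(k+1) := by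
      rw [← Real.rpow_natCast x 2, ← Real.rpow_add hx0]
      congr 1
      push_cast
      ring
    have h4 : (0:ℝ) ≤ c0 * max 1 ((max 1 c0) ^ (k - 1)) := by positivity
    rw [h3] at h2
    linarith

private lemma hasDerivAt_rpow_mul {f : ℝ → ℝ} {f' σ : ℝ} (p : ℝ) (hσ : 0 ≤ σ)
    (hf : HasDerivAt f f' σ) :
    HasDerivAt (fun s => (1 + s) ^ p * f s)
      (p * (1 + σ) ^ (p - 1) * f σ + (1 + σ) ^ p * f') σ := by
  have h1 : HasDerivAt (fun s : ℝ => 1 + s) 1 σ := by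
    simpa using (hasDerivAt_id σ).const_add (1 : ℝ)
  have h2 := (h1.rpow_const (p := p) (Or.inl (by positivity : (1:ℝ) + σ ≠ 0))).mul hf
  refine h2.congr_deriv ?_
  ring

private lemma key1 (k M μ q d n r x : ℝ)
    (hk : 0 < k) (hx : 1 ≤ x)
    (hq : 0 ≤ q) (hd : 0 ≤ d) (hn : 0 ≤ n)
    (hr1 : 2*r ≤ d + n) (hr2 : -(d+n) ≤ 2*r)
    (hM : (2*(2*k*(k+1)) + 2*k*(k+1) * (1 + |k - 1|)) * x^(k-1) ≤ x^(k+1) + M)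
    (hμ : 0 ≤ μ) :
    ((k+1)*x^k*(d+q) - 2*x^(k+1)*d)
      + (2*(k+1))*(k*x^(k-1)*(q+d+r+n/2) - x^k*(d+q))
      + (2*k*(k+1))*((k-1)*x^(k-2)*(r+n/2) + x^(k-1)*(d-q))
      - M*d - μ*(d+q)
    ≤ -(x^k*(q + x*d)) + (2*k*(k+1) * (1 + |k - 1|))*(x^(k-1)*n) := by
  have hx0 : (0:ℝ) < x := by linarith
  have hc0 : (0:ℝ) ≤ 2*k*(k+1) := by nlinarith
  have hy2 : (0:ℝ) ≤ x^(k-2) := Real.rpow_nonneg hx0.le _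
  have hy1 : (0:ℝ) ≤ x^(k-1) := Real.rpow_nonneg hx0.le _
  have hy0 : (0:ℝ) ≤ x^k := Real.rpow_nonneg hx0.le _
  have hyp : (0:ℝ) ≤ x^(k+1) := Real.rpow_nonneg hx0.le _
  have e1 : x^(k-2) * x = x^(k-1) := by
    rw [show k-2 = (k-1)-1 by ring, Real.rpow_sub hx0, Real.rpow_one]; field_simp
  have ep : x^k * x = x^(k+1) := by
    rw [Real.rpow_add hx0, Real.rpow_one]
  have h21 : x^(k-2) ≤ x^(k-1) := by nlinarith
  have epd : x^k*(x*d) = x^(k+1)*d := by rw [← ep]; ring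
  have hP1 : r + n/2 ≤ d/2 + n := by linarith
  have hka : (0:ℝ) ≤ |k-1| := abs_nonneg _
  have habs : (k-1)*(r+n/2) ≤ |k - 1| * (d/2+n) := by
    rcases abs_cases (k-1) with ⟨he, h0'⟩ | ⟨he, h0'⟩
    · rw [he]; exact mul_le_mul_of_nonneg_left hP1 h0'
    · rw [he]
      nlinarith [mul_nonneg (neg_nonneg.2 h0'.le) (show (0:ℝ) ≤ r+n/2+d/2+n by linarith)]
  have B' : (2*k*(k+1))*((k-1)*x^(k-2)*(r+n/2)) ≤ (2*k*(k+1)) * |k - 1| * (x^(k-1)*(d/2+n)) := by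
    have t1 : (k-1)*(r+n/2)*x^(k-2) ≤ (|k - 1| * (d/2+n))*x^(k-2) :=
      mul_le_mul_of_nonneg_right habs hy2
    have t2 : (|k - 1| * (d/2+n))*x^(k-2) ≤ (|k - 1| * (d/2+n))*x^(k-1) :=
      mul_le_mul_of_nonneg_left h21 (by positivity)
    nlinarith [mul_le_mul_of_nonneg_left (t1.trans t2) hc0]
  have A' : (2*k*(k+1))*(x^(k-1)*(r+n/2)) ≤ (2*k*(k+1))*(x^(k-1)*(d/2+n)) :=
    mul_le_mul_of_nonneg_left (mul_le_mul_of_nonneg_left hP1 hy1) hc0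
  have hMd := mul_le_mul_of_nonneg_right hM hd
  have s1 : 0 ≤ k*(k+1)*(x^(k-1)*d) := by
    have := mul_nonneg hy1 hd; nlinarith
  have s2 : 0 ≤ k*(k+1) * |k - 1| * (x^(k-1)*d) := by
    nlinarith [mul_nonneg (mul_nonneg (mul_nonneg hk.le (by linarith : (0:ℝ) ≤ k+1)) hka)
      (mul_nonneg hy1 hd)]
  have t1 : 0 ≤ k*(x^k*q) := mul_nonneg hk.le (mul_nonneg hy0 hq)
  have t2 : 0 ≤ (k+1)*(x^k*d) := mul_nonneg (by linarith) (mul_nonneg hy0 hd)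
  have t3 : 0 ≤ μ*q := mul_nonneg hμ hq
  have t4 : 0 ≤ μ*d := mul_nonneg hμ hd
  linarith [A', B', hMd, s1, s2, t1, t2, t3, t4, epd]

private lemma key2 (k M M₁ q d n r ts : ℝ)
    (hk : 0 < k) (hts : 0 ≤ ts)
    (hq : 0 ≤ q) (hd : 0 ≤ d) (hn : 0 ≤ n)
    (hr1 : 2*r ≤ d + n) (hr2 : -(d+n) ≤ 2*r)
    (hM1 : 2*(2*k*(k+1)) * (1+ts)^(k-1) ≤ (1+ts)^(k+1) + M₁)
    (hM10 : 0 ≤ M₁) (hM0 : 0 ≤ M) :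
    (1+ts)^k * ((q + (d + r + 1/4*n) + 1/4*n) + ts*(d+q))
      ≤ 2*((1+ts)^(k+1)*(d+q) + (2*(k+1))*((1+ts)^k*(q+d+r+n/2))
        + (2*k*(k+1))*((1+ts)^(k-1)*(r+n/2)) + (M/2)*(d+q) + M₁*(q+d+r+n/2)) := by
  have hx : (1:ℝ) ≤ 1 + ts := by linarith
  have hx0 : (0:ℝ) < 1 + ts := by linarith
  have hc0 : (0:ℝ) ≤ 2*k*(k+1) := by nlinarith
  have hy1 : (0:ℝ) ≤ (1+ts)^(k-1) := Real.rpow_nonneg hx0.le _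
  have hy0 : (0:ℝ) ≤ (1+ts)^k := Real.rpow_nonneg hx0.le _
  have hyp : (0:ℝ) ≤ (1+ts)^(k+1) := Real.rpow_nonneg hx0.le _
  have ep : (1+ts)^k * (1+ts) = (1+ts)^(k+1) := by
    rw [Real.rpow_add hx0, Real.rpow_one]
  have epe : (1+ts)^(k+1)*(d+q) = (1+ts)^k*(d+q) + ts*((1+ts)^k*(d+q)) := by
    rw [← ep]; ring
  have u0 : (2*k*(k+1))*((1+ts)^(k-1)*(-(d/2))) ≤ (2*k*(k+1))*((1+ts)^(k-1)*(r+n/2)) :=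
    mul_le_mul_of_nonneg_left (mul_le_mul_of_nonneg_left (by linarith) hy1) hc0
  have u1 : (2*(2*k*(k+1)) * (1+ts)^(k-1))*d ≤ ((1+ts)^(k+1) + M₁)*d :=
    mul_le_mul_of_nonneg_right hM1 hd
  have u3 : 0 ≤ ts*((1+ts)^k*(d+q)) := mul_nonneg hts (mul_nonneg hy0 (by linarith))
  have u4 : 0 ≤ (1+ts)^k*(q+d+r+n/2) := mul_nonneg hy0 (by linarith)
  have u5 : 0 ≤ M*(d+q) := mul_nonneg hM0 (by linarith)
  have u6 : 0 ≤ M₁*(2*q + 3/2*d + 2*r + n) := mul_nonneg hM10 (by linarith)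
  have u7 : 0 ≤ k*((1+ts)^k*(q+d+r+n/2)) := mul_nonneg hk.le u4
  have u8 : 0 ≤ (1+ts)^(k+1)*q := mul_nonneg hyp hq
  have u9 : 0 ≤ (1+ts)^k*(d+q) := mul_nonneg hy0 (by linarith)
  linarith [u0, u1, epe, u3, u4, u5, u6, u7, u8, u9]

private lemma key3 (k M M₁ q d n r : ℝ) (hk : 0 < k)
    (hq : 0 ≤ q) (hd : 0 ≤ d) (hn : 0 ≤ n)
    (hr1 : 2*r ≤ d + n) (hr2 : -(d+n) ≤ 2*r)
    (hsq : 0 ≤ d + r + 1/4*n) (hM0 : 0 ≤ M) (hM10 : 0 ≤ M₁) :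
    (d+q) + (2*(k+1))*(q+d+r+n/2) + (2*k*(k+1))*(r+n/2) + (M/2)*(d+q) + M₁*(q+d+r+n/2)
      ≤ (3 + M + 2*(k+1) + 10*k*(k+1) + M₁) * (q + 1/4*n + (d + r + 1/4*n)) := by
  have hc0 : (0:ℝ) ≤ 2*k*(k+1) := by nlinarith
  have hes : 0 ≤ q + d + r + n/2 := by linarith
  have v1 : (2*k*(k+1))*(r+n/2) ≤ (2*k*(k+1))*(5*(q+d+r+n/2)) :=
    mul_le_mul_of_nonneg_left (by linarith) hc0
  have v3 : 0 ≤ M*(2*(q+d+r+n/2) - (d+q)) := mul_nonneg hM0 (by linarith)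
  have v4 : 0 ≤ (k+1)*(q+d+r+n/2) := mul_nonneg (by linarith) hes
  have v5 : 0 ≤ k*(k+1)*(q+d+r+n/2) := mul_nonneg (by nlinarith) hes
  linarith [v1, v3, v4, v5, hes]

/-- Lemma 2.5: weighted energy estimate, with constant depending only on `k`. -/
theorem stmt_5 :
    ∀ k : ℝ, 0 < k → ∃ C : ℝ, 0 < C ∧
      ∀ (H : Type u) [NormedAddCommGroup H] [InnerProductSpace ℝ H] [CompleteSpace H]
        (A : H →L[ℝ] H), IsSelfAdjoint A → (∀ x : H, 0 ≤ ⟪A x, x⟫) →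
        ∀ (w : ℝ → H) (w0 w1 : H), ContDiff ℝ 2 w →
          (∀ t ≥ (0:ℝ), deriv (deriv w) t + A (w t) + deriv w t = 0) →
          w 0 = w0 → deriv w 0 = w1 →
          ∀ t ≥ (0:ℝ),
            (1 + t) ^ k *
                ((⟪A (w t), w t⟫ + ‖deriv w t + (1 / 2 : ℝ) • w t‖ ^ 2
                    + (1 / 4) * ‖w t‖ ^ 2)
                  + t * (‖deriv w t‖ ^ 2 + ⟪A (w t), w t⟫))
              + ∫ s in (0:ℝ)..t,
                  (1 + s) ^ k * (⟪A (w s), w s⟫ + (1 + s) * ‖deriv w s‖ ^ 2)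
            ≤ C * ((⟪A w0, w0⟫ + (1 / 4) * ‖w0‖ ^ 2 + ‖w1 + (1 / 2 : ℝ) • w0‖ ^ 2)
                + ∫ s in (0:ℝ)..t, (1 + s) ^ (k - 1) * ‖w s‖ ^ 2) := by
  intro k hk
  have hka : (0:ℝ) ≤ |k - 1| := abs_nonneg _
  have hkk : (0:ℝ) ≤ 2*k*(k+1) := by nlinarith
  obtain ⟨M, hM0, hM⟩ := aux_rpow k (2*(2*k*(k+1)) + 2*k*(k+1) * (1 + |k - 1|))
    (by nlinarith [mul_nonneg hkk hka])
  obtain ⟨M₁, hM₁0, hM₁⟩ := aux_rpow k (2*(2*k*(k+1))) (by nlinarith)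
  refine ⟨2*(3 + M + 2*(k+1) + 10*k*(k+1) + M₁) + 2*(2*k*(k+1) * (1 + |k - 1|)) + 1,
    by nlinarith [mul_nonneg hkk hka], ?_⟩
  intro H _ _ _ A hA hpos w w0 w1 hw heq hw0 hw1 t ht
  -- selfadjointness
  have hsym : ∀ x y : H, ⟪A x, y⟫ = ⟪x, A y⟫ := fun x y => by
    calc ⟪A x, y⟫ = ⟪(ContinuousLinearMap.adjoint A) x, y⟫ := by
          rw [ContinuousLinearMap.isSelfAdjoint_iff'.mp hA]
      _ = ⟪x, A y⟫ := ContinuousLinearMap.adjoint_inner_left A y x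
  -- smoothness
  rw [show (2 : WithTop ℕ∞) = 1 + 1 by norm_num] at hw
  obtain ⟨hdw, -, hw1'⟩ := contDiff_succ_iff_deriv.mp hw
  obtain ⟨hdu, hcu'⟩ := contDiff_one_iff_deriv.mp hw1'
  have hwc : Continuous w := hdw.continuous
  have huc : Continuous (deriv w) := hdu.continuous
  -- pointwise derivatives
  have hwd : ∀ σ : ℝ, HasDerivAt w (deriv w σ) σ := fun σ => (hdw σ).hasDerivAt
  have hud : ∀ σ : ℝ, HasDerivAt (deriv w) (deriv (deriv w) σ) σ := fun σ => (hdu σ).hasDerivAt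
  have hode : ∀ σ : ℝ, 0 ≤ σ → deriv (deriv w) σ = -A (w σ) - deriv w σ := by
    intro σ hσ
    have h : deriv (deriv w) σ + (A (w σ) + deriv w σ) = 0 := by
      rw [← add_assoc]; exact heq σ hσ
    rw [eq_neg_of_add_eq_zero_left h]; abel
  -- scalar derivative facts
  have hQd : ∀ σ : ℝ, HasDerivAt (fun s => ⟪A (w s), w s⟫) (2*⟪A (w σ), deriv w σ⟫) σ := by
    intro σ
    have h1 : HasDerivAt (fun s => A (w s)) (A (deriv w σ)) σ :=
      A.hasFDerivAt.comp_hasDerivAt σ (hwd σ)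
    have h2 := h1.inner ℝ (hwd σ)
    refine h2.congr_deriv ?_
    rw [hsym (deriv w σ) (w σ), real_inner_comm (deriv w σ) (A (w σ))]; ring
  have hNd : ∀ σ : ℝ, HasDerivAt (fun s => ‖w s‖^2) (2*⟪deriv w σ, w σ⟫) σ := by
    intro σ
    have h3 : (fun s => ‖w s‖^2 : ℝ → ℝ) = fun s => ⟪w s, w s⟫ :=
      funext fun s => (real_inner_self_eq_norm_sq _).symm
    rw [h3]
    have h2 := (hwd σ).inner ℝ (hwd σ)
    refine h2.congr_deriv ?_
    rw [real_inner_comm (w σ) (deriv w σ)]; ring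
  have hDd : ∀ σ : ℝ, 0 ≤ σ →
      HasDerivAt (fun s => ‖deriv w s‖^2) (-2*⟪A (w σ), deriv w σ⟫ - 2*‖deriv w σ‖^2) σ := by
    intro σ hσ
    have h3 : (fun s => ‖deriv w s‖^2 : ℝ → ℝ) = fun s => ⟪deriv w s, deriv w s⟫ :=
      funext fun s => (real_inner_self_eq_norm_sq _).symm
    rw [h3]
    have h2 := (hud σ).inner ℝ (hud σ)
    refine h2.congr_deriv ?_
    rw [hode σ hσ, inner_sub_right, inner_sub_left, inner_neg_right, inner_neg_left,
      real_inner_self_eq_norm_sq, real_inner_comm (deriv w σ) (A (w σ))]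
    ring
  have hRd : ∀ σ : ℝ, 0 ≤ σ →
      HasDerivAt (fun s => ⟪deriv w s, w s⟫)
        (‖deriv w σ‖^2 - ⟪A (w σ), w σ⟫ - ⟪deriv w σ, w σ⟫) σ := by
    intro σ hσ
    have h2 := (hud σ).inner ℝ (hwd σ)
    refine h2.congr_deriv ?_
    rw [hode σ hσ, inner_sub_left, inner_neg_left, real_inner_self_eq_norm_sq]
    ring
  -- the Lyapunov functional and its derivative
  set L : ℝ → ℝ := fun σ => (1+σ)^(k+1)*(‖deriv w σ‖^2 + ⟪A (w σ), w σ⟫)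
    + (2*(k+1))*((1+σ)^k*(⟪A (w σ), w σ⟫ + ‖deriv w σ‖^2 + ⟪deriv w σ, w σ⟫ + ‖w σ‖^2/2))
    + (2*k*(k+1))*((1+σ)^(k-1)*(⟪deriv w σ, w σ⟫ + ‖w σ‖^2/2))
    + (M/2)*(‖deriv w σ‖^2 + ⟪A (w σ), w σ⟫)
    + M₁*(⟪A (w σ), w σ⟫ + ‖deriv w σ‖^2 + ⟪deriv w σ, w σ⟫ + ‖w σ‖^2/2) with hLdef
  set Ld : ℝ → ℝ := fun σ =>
    ((k+1)*(1+σ)^k*(‖deriv w σ‖^2 + ⟪A (w σ), w σ⟫) - 2*(1+σ)^(k+1)*‖deriv w σ‖^2)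
    + (2*(k+1))*(k*(1+σ)^(k-1)*(⟪A (w σ), w σ⟫ + ‖deriv w σ‖^2 + ⟪deriv w σ, w σ⟫ + ‖w σ‖^2/2)
        - (1+σ)^k*(‖deriv w σ‖^2 + ⟪A (w σ), w σ⟫))
    + (2*k*(k+1))*((k-1)*(1+σ)^(k-2)*(⟪deriv w σ, w σ⟫ + ‖w σ‖^2/2)
        + (1+σ)^(k-1)*(‖deriv w σ‖^2 - ⟪A (w σ), w σ⟫))
    - M*‖deriv w σ‖^2 - M₁*(‖deriv w σ‖^2 + ⟪A (w σ), w σ⟫) with hLddef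
  have hLD : ∀ σ ∈ Set.uIcc (0:ℝ) t, HasDerivAt L (Ld σ) σ := by
    intro σ hσ
    have hσ0 : 0 ≤ σ := by
      rw [Set.uIcc_of_le ht] at hσ; exact hσ.1
    have T1 := hasDerivAt_rpow_mul (k+1) hσ0 ((hDd σ hσ0).add (hQd σ))
    have T2 := (hasDerivAt_rpow_mul k hσ0
      ((((hQd σ).add (hDd σ hσ0)).add (hRd σ hσ0)).add ((hNd σ).div_const 2))).const_mul
      (2*(k+1))
    have T3 := (hasDerivAt_rpow_mul (k-1) hσ0
      ((hRd σ hσ0).add ((hNd σ).div_const 2))).const_mul (2*k*(k+1))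
    have T4 := ((hDd σ hσ0).add (hQd σ)).const_mul (M/2)
    have T5 := ((((hQd σ).add (hDd σ hσ0)).add (hRd σ hσ0)).add
      ((hNd σ).div_const 2)).const_mul M₁
    have T := (((T1.add T2).add T3).add T4).add T5
    refine T.congr_deriv ?_
    simp only [show k+1-1 = k by ring, show k-1-1 = k-2 by ring, hLddef, Pi.add_apply]
    ring
  -- continuity facts
  have hQc : Continuous (fun σ : ℝ => ⟪A (w σ), w σ⟫) := (A.continuous.comp hwc).inner hwc
  have hDc : Continuous (fun σ : ℝ => ‖deriv w σ‖^2) := (huc.norm).pow 2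
  have hNc : Continuous (fun σ : ℝ => ‖w σ‖^2) := (hwc.norm).pow 2
  have hRc : Continuous (fun σ : ℝ => ⟪deriv w σ, w σ⟫) := huc.inner hwc
  have hrp : ∀ p : ℝ, ContinuousOn (fun σ : ℝ => (1+σ)^p) (Set.uIcc 0 t) := by
    intro p
    apply ContinuousOn.rpow_const (continuous_const.add continuous_id).continuousOn
    intro x hx
    rw [Set.uIcc_of_le ht] at hx
    refine Or.inl (ne_of_gt ?_)
    show (0:ℝ) < 1 + x
    linarith [hx.1]
  have hLdcont : ContinuousOn Ld (Set.uIcc (0:ℝ) t) := by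
    rw [hLddef]
    have esC : ContinuousOn (fun σ : ℝ =>
        ⟪A (w σ), w σ⟫ + ‖deriv w σ‖^2 + ⟪deriv w σ, w σ⟫ + ‖w σ‖^2/2) (Set.uIcc (0:ℝ) t) :=
      (((hQc.add hDc).add hRc).add (hNc.div_const 2)).continuousOn
    have pC : ContinuousOn (fun σ : ℝ => ⟪deriv w σ, w σ⟫ + ‖w σ‖^2/2) (Set.uIcc (0:ℝ) t) :=
      (hRc.add (hNc.div_const 2)).continuousOn
    have c1 : ContinuousOn (fun σ : ℝ => (k+1)*(1+σ)^k*(‖deriv w σ‖^2 + ⟪A (w σ), w σ⟫))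
        (Set.uIcc (0:ℝ) t) := (continuousOn_const.mul (hrp k)).mul ((hDc.add hQc).continuousOn)
    have c2 : ContinuousOn (fun σ : ℝ => 2*(1+σ)^(k+1)*‖deriv w σ‖^2) (Set.uIcc (0:ℝ) t) :=
      (continuousOn_const.mul (hrp (k+1))).mul hDc.continuousOn
    have c3 : ContinuousOn (fun σ : ℝ => k*(1+σ)^(k-1)*(⟪A (w σ), w σ⟫ + ‖deriv w σ‖^2
        + ⟪deriv w σ, w σ⟫ + ‖w σ‖^2/2)) (Set.uIcc (0:ℝ) t) :=
      (continuousOn_const.mul (hrp (k-1))).mul esC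
    have c4 : ContinuousOn (fun σ : ℝ => (1+σ)^k*(‖deriv w σ‖^2 + ⟪A (w σ), w σ⟫))
        (Set.uIcc (0:ℝ) t) := (hrp k).mul ((hDc.add hQc).continuousOn)
    have c5 : ContinuousOn (fun σ : ℝ => (k-1)*(1+σ)^(k-2)*(⟪deriv w σ, w σ⟫ + ‖w σ‖^2/2))
        (Set.uIcc (0:ℝ) t) := (continuousOn_const.mul (hrp (k-2))).mul pC
    have c6 : ContinuousOn (fun σ : ℝ => (1+σ)^(k-1)*(‖deriv w σ‖^2 - ⟪A (w σ), w σ⟫))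
        (Set.uIcc (0:ℝ) t) := (hrp (k-1)).mul ((hDc.sub hQc).continuousOn)
    have c7 : ContinuousOn (fun σ : ℝ => M*‖deriv w σ‖^2) (Set.uIcc (0:ℝ) t) :=
      continuousOn_const.mul hDc.continuousOn
    have c8 : ContinuousOn (fun σ : ℝ => M₁*(‖deriv w σ‖^2 + ⟪A (w σ), w σ⟫))
        (Set.uIcc (0:ℝ) t) := continuousOn_const.mul ((hDc.add hQc).continuousOn)
    exact ((((c1.sub c2).add (continuousOn_const.mul (c3.sub c4))).add
      (continuousOn_const.mul (c5.add c6))).sub c7).sub c8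
  have hLint : IntervalIntegrable Ld MeasureTheory.volume 0 t := hLdcont.intervalIntegrable
  have hFTC : ∫ σ in (0:ℝ)..t, Ld σ = L t - L 0 :=
    intervalIntegral.integral_eq_sub_of_hasDerivAt hLD hLint
  -- integrands
  have hfIint : IntervalIntegrable
      (fun s : ℝ => (1 + s) ^ k * (⟪A (w s), w s⟫ + (1 + s) * ‖deriv w s‖ ^ 2))
      MeasureTheory.volume 0 t :=
    (((hrp k).mul (hQc.continuousOn.add
      (((continuous_const.add continuous_id).continuousOn).mul
        hDc.continuousOn)))).intervalIntegrable
  have hfJint : IntervalIntegrable (fun s : ℝ => (1 + s) ^ (k - 1) * ‖w s‖ ^ 2)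
      MeasureTheory.volume 0 t :=
    ((hrp (k-1)).mul hNc.continuousOn).intervalIntegrable
  -- pointwise inequality and integral comparison
  have hinner : ∀ a b : H, 2*⟪a, b⟫ ≤ ‖a‖^2 + ‖b‖^2 ∧
      -(‖a‖^2 + ‖b‖^2) ≤ 2*⟪a, b⟫ := by
    intro a b
    have h1 := abs_real_inner_le_norm a b
    have h2 := abs_le.mp h1
    constructor <;> nlinarith [sq_nonneg (‖a‖ - ‖b‖), sq_nonneg (‖a‖ + ‖b‖),
      h2.1, h2.2]
  have hnegint : IntervalIntegrable
      (fun s : ℝ => -((1 + s) ^ k * (⟪A (w s), w s⟫ + (1 + s) * ‖deriv w s‖ ^ 2)))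
      MeasureTheory.volume 0 t := hfIint.neg
  have hcmint : IntervalIntegrable
      (fun s : ℝ => (2*k*(k+1) * (1 + |k - 1|)) * ((1 + s) ^ (k - 1) * ‖w s‖ ^ 2))
      MeasureTheory.volume 0 t := hfJint.const_mul _
  have hphiint : IntervalIntegrable
      (fun s : ℝ => -((1 + s) ^ k * (⟪A (w s), w s⟫ + (1 + s) * ‖deriv w s‖ ^ 2))
          + (2*k*(k+1) * (1 + |k - 1|)) * ((1 + s) ^ (k - 1) * ‖w s‖ ^ 2))
      MeasureTheory.volume 0 t := hnegint.add hcmint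
  have hmono : ∫ σ in (0:ℝ)..t, Ld σ ≤
      ∫ σ in (0:ℝ)..t,
        (-((1 + σ) ^ k * (⟪A (w σ), w σ⟫ + (1 + σ) * ‖deriv w σ‖ ^ 2))
          + (2*k*(k+1) * (1 + |k - 1|)) * ((1 + σ) ^ (k - 1) * ‖w σ‖ ^ 2)) := by
    apply intervalIntegral.integral_mono_on ht hLint hphiint
    intro σ hσ
    have key := key1 k M M₁ (⟪A (w σ), w σ⟫) (‖deriv w σ‖^2) (‖w σ‖^2) (⟪deriv w σ, w σ⟫)
      (1+σ) hk (by linarith [hσ.1]) (hpos (w σ)) (sq_nonneg _) (sq_nonneg _)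
      (hinner _ _).1 (hinner _ _).2 (hM (1+σ) (by linarith [hσ.1])) hM₁0
    simp only [hLddef]
    linarith [key]
  have hsplit : ∫ σ in (0:ℝ)..t,
        (-((1 + σ) ^ k * (⟪A (w σ), w σ⟫ + (1 + σ) * ‖deriv w σ‖ ^ 2))
          + (2*k*(k+1) * (1 + |k - 1|)) * ((1 + σ) ^ (k - 1) * ‖w σ‖ ^ 2))
      = -(∫ s in (0:ℝ)..t, (1 + s) ^ k * (⟪A (w s), w s⟫ + (1 + s) * ‖deriv w s‖ ^ 2))
        + (2*k*(k+1) * (1 + |k - 1|)) * ∫ s in (0:ℝ)..t, (1 + s) ^ (k - 1) * ‖w s‖ ^ 2 := by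
    rw [intervalIntegral.integral_add hnegint hcmint,
      intervalIntegral.integral_neg, intervalIntegral.integral_const_mul]
  have hI0 : 0 ≤ ∫ s in (0:ℝ)..t, (1 + s) ^ k * (⟪A (w s), w s⟫ + (1 + s) * ‖deriv w s‖ ^ 2) := by
    apply intervalIntegral.integral_nonneg ht
    intro σ hσ
    have h1 : (0:ℝ) ≤ (1+σ)^k := Real.rpow_nonneg (by linarith [hσ.1]) _
    have h2 : (0:ℝ) ≤ ⟪A (w σ), w σ⟫ + (1+σ)*‖deriv w σ‖^2 :=
      add_nonneg (hpos (w σ)) (mul_nonneg (by linarith [hσ.1]) (sq_nonneg _))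
    exact mul_nonneg h1 h2
  have hJ0 : 0 ≤ ∫ s in (0:ℝ)..t, (1 + s) ^ (k - 1) * ‖w s‖ ^ 2 := by
    apply intervalIntegral.integral_nonneg ht
    intro σ hσ
    exact mul_nonneg (Real.rpow_nonneg (by linarith [hσ.1]) _) (sq_nonneg _)
  -- norm expansion
  have hexp : ∀ (a b : H), ‖a + (1/2:ℝ) • b‖^2 = ‖a‖^2 + ⟪a, b⟫ + 1/4*‖b‖^2 := by
    intro a b
    rw [norm_add_sq_real, real_inner_smul_right, norm_smul, Real.norm_eq_abs,
      abs_of_pos (by norm_num : (0:ℝ) < 1/2)]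
    ring
  -- head bound
  have hsq_t : (0:ℝ) ≤ ‖deriv w t‖^2 + ⟪deriv w t, w t⟫ + 1/4*‖w t‖^2 := by
    have := sq_nonneg ‖deriv w t + (1/2:ℝ) • w t‖
    rw [hexp (deriv w t) (w t)] at this
    linarith
  have hhead : (1 + t) ^ k *
        ((⟪A (w t), w t⟫ + (‖deriv w t‖^2 + ⟪deriv w t, w t⟫ + 1/4*‖w t‖^2)
            + (1 / 4) * ‖w t‖ ^ 2)
          + t * (‖deriv w t‖ ^ 2 + ⟪A (w t), w t⟫)) ≤ 2 * L t := by
    have key := key2 k M M₁ (⟪A (w t), w t⟫) (‖deriv w t‖^2) (‖w t‖^2) (⟪deriv w t, w t⟫) t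
      hk ht (hpos (w t)) (sq_nonneg _) (sq_nonneg _) (hinner _ _).1 (hinner _ _).2
      (hM₁ (1+t) (by linarith)) hM₁0 hM0
    simp only [hLdef]
    linarith [key]
  -- initial value bound
  have hsq_0 : (0:ℝ) ≤ ‖w1‖^2 + ⟪w1, w0⟫ + 1/4*‖w0‖^2 := by
    have := sq_nonneg ‖w1 + (1/2:ℝ) • w0‖
    rw [hexp w1 w0] at this
    linarith
  have hL0 : L 0 ≤ (3 + M + 2*(k+1) + 10*k*(k+1) + M₁) *
      (⟪A w0, w0⟫ + 1/4*‖w0‖^2 + (‖w1‖^2 + ⟪w1, w0⟫ + 1/4*‖w0‖^2)) := by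
    have eL : L 0 = (‖w1‖^2 + ⟪A w0, w0⟫)
        + (2*(k+1))*(⟪A w0, w0⟫ + ‖w1‖^2 + ⟪w1, w0⟫ + ‖w0‖^2/2)
        + (2*k*(k+1))*(⟪w1, w0⟫ + ‖w0‖^2/2)
        + (M/2)*(‖w1‖^2 + ⟪A w0, w0⟫)
        + M₁*(⟪A w0, w0⟫ + ‖w1‖^2 + ⟪w1, w0⟫ + ‖w0‖^2/2) := by
      simp only [hLdef, add_zero, Real.one_rpow, hw0, hw1]
      ring
    rw [eL]
    have key := key3 k M M₁ (⟪A w0, w0⟫) (‖w1‖^2) (‖w0‖^2) (⟪w1, w0⟫) hk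
      (hpos w0) (sq_nonneg _) (sq_nonneg _) (hinner w1 w0).1 (hinner w1 w0).2
      hsq_0 hM0 hM₁0
    linarith [key]
  -- nonnegativity of the data norm
  have hE00 : (0:ℝ) ≤ ⟪A w0, w0⟫ + 1/4*‖w0‖^2 + (‖w1‖^2 + ⟪w1, w0⟫ + 1/4*‖w0‖^2) := by
    have h1 := hpos w0
    have h2 : (0:ℝ) ≤ ‖w0‖^2 := sq_nonneg _
    linarith [hsq_0]
  have p1 : (0:ℝ) ≤ (2*k*(k+1) * (1 + |k - 1|)) *
      (⟪A w0, w0⟫ + 1/4*‖w0‖^2 + (‖w1‖^2 + ⟪w1, w0⟫ + 1/4*‖w0‖^2)) :=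
    mul_nonneg (by nlinarith [mul_nonneg hkk hka]) hE00
  have p2 : (0:ℝ) ≤ (3 + M + 2*(k+1) + 10*k*(k+1) + M₁) *
      (∫ s in (0:ℝ)..t, (1 + s) ^ (k - 1) * ‖w s‖ ^ 2) :=
    mul_nonneg (by nlinarith) hJ0
  -- conclusion
  rw [hexp (deriv w t) (w t), hexp w1 w0]
  have hfinal : ∀ hd II JJ E0 Lt L0 Int : ℝ, hd ≤ 2*Lt → Int = Lt - L0 →
      Int ≤ -II + 2*k*(k+1)*(1+|k - 1|)*JJ → 0 ≤ II → 0 ≤ JJ →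
      L0 ≤ (3 + M + 2*(k+1) + 10*k*(k+1) + M₁)*E0 → 0 ≤ E0 →
      0 ≤ 2*k*(k+1)*(1+|k - 1|)*E0 → 0 ≤ (3 + M + 2*(k+1) + 10*k*(k+1) + M₁)*JJ →
      hd + II ≤ (2*(3 + M + 2*(k+1) + 10*k*(k+1) + M₁)
        + 2*(2*k*(k+1)*(1 + |k - 1|)) + 1)*(E0 + JJ) := by
    intro hd II JJ E0 Lt L0 Int h1 h2 h3 h4 h5 h6 h7 h8 h9
    linarith
  exact hfinal _ _ _ _ (L t) (L 0) _ hhead hFTC (by linarith [hmono, hsplit]) hI0 hJ0 hL0 hE00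
    (by linarith [p1]) p2
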